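/- Identifiability for a categorical outcome (Theorem 2 of the paper): Suppose two models (Ω, ℱ, μ, G, A, Y⁰, Y¹) and (Ω', ℱ', μ', G', A', Y'⁰, Y'¹) with outcomes taking values in Fin k each satisfy Assumption 1, Assumption 2 (categorical version), and Condition 2, and have the same observed data distribution, i.e. μ(G=g, A=a, Y=y) = μ'(G'=g, A'=a, Y'=y) for all g ∈ Fin m, a ∈ {0,1}, y ∈ Fin k. Then for all i, j ∈ Fin k and every g ∈ Fin m: P(Y⁰=i, Y¹=j | G=g) = P'(Y'⁰=i, Y'¹=j | G'=g); that is, the joint distributions P(Y⁰, Y¹ | G=g) are identified from the observed data distribution. -/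

import Mathlib

open MeasureTheory ProbabilityTheory

/-- Conditional probability `P(E | F) = μ(E ∩ F) / μ(F)` as a real number. -/
noncomputable def condP {Ω : Type*} [MeasurableSpace Ω] (μ : Measure Ω) (E F : Set Ω) : ℝ :=
  (μ (E ∩ F)).toReal / (μ F).toReal

lemma toReal_partition {Ω α : Type*} [MeasurableSpace Ω] [Fintype α] [MeasurableSpace α]
    [MeasurableSingletonClass α]
    (μ : Measure Ω) [IsFiniteMeasure μ] {f : Ω → α} (hf : Measurable f) {S : Set Ω}
    (hS : MeasurableSet S) :
    (μ S).toReal = ∑ x, (μ (S ∩ f ⁻¹' {x})).toReal := by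
  have h1 : S = ⋃ x, S ∩ f ⁻¹' {x} := by ext ω; simp
  have hd : Pairwise (Function.onFun Disjoint fun x => S ∩ f ⁻¹' {x}) := by
    intro x y hxy
    refine Set.disjoint_left.mpr ?_
    rintro ω ⟨-, hx⟩ ⟨-, hy⟩
    exact hxy (by simp at hx hy; rw [← hx, ← hy])
  rw [← ENNReal.toReal_sum (fun a _ => measure_ne_top μ _)]
  congr 1
  conv_lhs => rw [h1]
  rw [measure_iUnion hd (fun x => hS.inter (hf (measurableSet_singleton x))), tsum_fintype]

lemma model_facts {Ω : Type*} [MeasurableSpace Ω] (μ : Measure Ω) [IsProbabilityMeasure μ]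
    {m k : ℕ} (G : Ω → Fin m) (A : Ω → Bool) (Y0 Y1 Y : Ω → Fin k)
    (hGmeas : Measurable G) (hAmeas : Measurable A)
    (hY0meas : Measurable Y0) (hY1meas : Measurable Y1)
    (hYdef : ∀ ω, Y ω = bif A ω then Y1 ω else Y0 ω)
    (hA1pos : ∀ g : Fin m, 0 < μ {ω | G ω = g})
    (hA1ind : ∀ (g : Fin m) (a : Bool) (i j : Fin k),
      condP μ {ω | A ω = a ∧ Y0 ω = i ∧ Y1 ω = j} {ω | G ω = g} =
        condP μ {ω | A ω = a} {ω | G ω = g} *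
          condP μ {ω | Y0 ω = i ∧ Y1 ω = j} {ω | G ω = g})
    (hA2 : ∀ (i j : Fin k) (g : Fin m), 0 < μ {ω | Y0 ω = i ∧ G ω = g} →
      condP μ {ω | Y1 ω = j} {ω | Y0 ω = i ∧ G ω = g} =
        condP μ {ω | Y1 ω = j} {ω | Y0 ω = i}) :
    (∀ (g : Fin m) (i j : Fin k),
      condP μ {ω | Y0 ω = i ∧ Y1 ω = j} {ω | G ω = g} =
        condP μ {ω | Y0 ω = i} {ω | G ω = g} * condP μ {ω | Y1 ω = j} {ω | Y0 ω = i})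
  ∧ (∀ (g : Fin m) (i : Fin k), (μ {ω | G ω = g ∧ A ω = false ∧ Y ω = i}).toReal
        = condP μ {ω | A ω = false} {ω | G ω = g} * condP μ {ω | Y0 ω = i} {ω | G ω = g}
            * (μ {ω | G ω = g}).toReal)
  ∧ (∀ (g : Fin m) (j : Fin k), (μ {ω | G ω = g ∧ A ω = true ∧ Y ω = j}).toReal
        = condP μ {ω | A ω = true} {ω | G ω = g} * condP μ {ω | Y1 ω = j} {ω | G ω = g}
            * (μ {ω | G ω = g}).toReal)
  ∧ (∀ (g : Fin m) (j : Fin k), condP μ {ω | Y1 ω = j} {ω | G ω = g}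
        = ∑ i, condP μ {ω | Y0 ω = i} {ω | G ω = g} * condP μ {ω | Y1 ω = j} {ω | Y0 ω = i})
  ∧ (∀ g : Fin m, (μ {ω | G ω = g}).toReal
        = ∑ a : Bool, ∑ y, (μ {ω | G ω = g ∧ A ω = a ∧ Y ω = y}).toReal)
  ∧ (∀ g : Fin m, condP μ {ω | A ω = true} {ω | G ω = g} * (μ {ω | G ω = g}).toReal
        = ∑ y, (μ {ω | G ω = g ∧ A ω = true ∧ Y ω = y}).toReal)
  ∧ (∀ g : Fin m, condP μ {ω | A ω = false} {ω | G ω = g}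
        = 1 - condP μ {ω | A ω = true} {ω | G ω = g}) := by
  -- basic measurability
  have hMG : ∀ g : Fin m, MeasurableSet {ω | G ω = g} := fun g =>
    hGmeas (measurableSet_singleton g)
  have hMA : ∀ a : Bool, MeasurableSet {ω | A ω = a} := fun a =>
    hAmeas (measurableSet_singleton a)
  have hMY0 : ∀ i : Fin k, MeasurableSet {ω | Y0 ω = i} := fun i =>
    hY0meas (measurableSet_singleton i)
  have hMY1 : ∀ j : Fin k, MeasurableSet {ω | Y1 ω = j} := fun j =>
    hY1meas (measurableSet_singleton j)
  have hPgpos : ∀ g : Fin m, 0 < (μ {ω | G ω = g}).toReal := fun g =>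
    ENNReal.toReal_pos (hA1pos g).ne' (measure_ne_top μ _)
  -- observed sets rewritten
  have eAf : ∀ (g : Fin m) (i : Fin k),
      {ω | G ω = g ∧ A ω = false ∧ Y ω = i} = {ω | A ω = false ∧ Y0 ω = i} ∩ {ω | G ω = g} := by
    intro g i; ext ω
    simp only [Set.mem_setOf_eq, Set.mem_inter_iff]
    constructor
    · rintro ⟨hg, ha, hy⟩
      rw [hYdef ω, ha] at hy; simp at hy
      exact ⟨⟨ha, hy⟩, hg⟩
    · rintro ⟨⟨ha, hy⟩, hg⟩
      refine ⟨hg, ha, ?_⟩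
      rw [hYdef ω, ha]; simpa using hy
  have eAt : ∀ (g : Fin m) (j : Fin k),
      {ω | G ω = g ∧ A ω = true ∧ Y ω = j} = {ω | A ω = true ∧ Y1 ω = j} ∩ {ω | G ω = g} := by
    intro g j; ext ω
    simp only [Set.mem_setOf_eq, Set.mem_inter_iff]
    constructor
    · rintro ⟨hg, ha, hy⟩
      rw [hYdef ω, ha] at hy; simp at hy
      exact ⟨⟨ha, hy⟩, hg⟩
    · rintro ⟨⟨ha, hy⟩, hg⟩
      refine ⟨hg, ha, ?_⟩
      rw [hYdef ω, ha]; simpa using hy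
  -- partition sums at condP level
  have hp0sum : ∀ (g : Fin m) (i : Fin k),
      ∑ j, condP μ {ω | Y0 ω = i ∧ Y1 ω = j} {ω | G ω = g}
        = condP μ {ω | Y0 ω = i} {ω | G ω = g} := by
    intro g i
    simp only [condP, ← Finset.sum_div]
    congr 1
    rw [toReal_partition μ hY1meas ((hMY0 i).inter (hMG g))]
    refine Finset.sum_congr rfl fun j _ => ?_
    have e : ({ω | Y0 ω = i} : Set Ω) ∩ {ω | G ω = g} ∩ Y1 ⁻¹' {j}
        = {ω | Y0 ω = i ∧ Y1 ω = j} ∩ {ω | G ω = g} := by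
      ext ω
      simp only [Set.mem_inter_iff, Set.mem_setOf_eq, Set.mem_preimage, Set.mem_singleton_iff]
      tauto
    rw [e]
  have hq0sum : ∀ (g : Fin m) (j : Fin k),
      ∑ i, condP μ {ω | Y0 ω = i ∧ Y1 ω = j} {ω | G ω = g}
        = condP μ {ω | Y1 ω = j} {ω | G ω = g} := by
    intro g j
    simp only [condP, ← Finset.sum_div]
    congr 1
    rw [toReal_partition μ hY0meas ((hMY1 j).inter (hMG g))]
    refine Finset.sum_congr rfl fun i _ => ?_
    have e : ({ω | Y1 ω = j} : Set Ω) ∩ {ω | G ω = g} ∩ Y0 ⁻¹' {i}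
        = {ω | Y0 ω = i ∧ Y1 ω = j} ∩ {ω | G ω = g} := by
      ext ω
      simp only [Set.mem_inter_iff, Set.mem_setOf_eq, Set.mem_preimage, Set.mem_singleton_iff]
      tauto
    rw [e]
  have hAfsum : ∀ (g : Fin m) (i : Fin k),
      ∑ j, condP μ {ω | A ω = false ∧ Y0 ω = i ∧ Y1 ω = j} {ω | G ω = g}
        = condP μ {ω | A ω = false ∧ Y0 ω = i} {ω | G ω = g} := by
    intro g i
    simp only [condP, ← Finset.sum_div]
    congr 1
    rw [toReal_partition μ hY1meas
      (S := {ω | A ω = false ∧ Y0 ω = i} ∩ {ω | G ω = g})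
      (((hMA false).inter (hMY0 i)).inter (hMG g))]
    refine Finset.sum_congr rfl fun j _ => ?_
    have e : ({ω | A ω = false ∧ Y0 ω = i} : Set Ω) ∩ {ω | G ω = g} ∩ Y1 ⁻¹' {j}
        = {ω | A ω = false ∧ Y0 ω = i ∧ Y1 ω = j} ∩ {ω | G ω = g} := by
      ext ω
      simp only [Set.mem_inter_iff, Set.mem_setOf_eq, Set.mem_preimage, Set.mem_singleton_iff]
      tauto
    rw [e]
  have hAtsum : ∀ (g : Fin m) (j : Fin k),
      ∑ i, condP μ {ω | A ω = true ∧ Y0 ω = i ∧ Y1 ω = j} {ω | G ω = g}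
        = condP μ {ω | A ω = true ∧ Y1 ω = j} {ω | G ω = g} := by
    intro g j
    simp only [condP, ← Finset.sum_div]
    congr 1
    rw [toReal_partition μ hY0meas
      (S := {ω | A ω = true ∧ Y1 ω = j} ∩ {ω | G ω = g})
      (((hMA true).inter (hMY1 j)).inter (hMG g))]
    refine Finset.sum_congr rfl fun i _ => ?_
    have e : ({ω | A ω = true ∧ Y1 ω = j} : Set Ω) ∩ {ω | G ω = g} ∩ Y0 ⁻¹' {i}
        = {ω | A ω = true ∧ Y0 ω = i ∧ Y1 ω = j} ∩ {ω | G ω = g} := by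
      ext ω
      simp only [Set.mem_inter_iff, Set.mem_setOf_eq, Set.mem_preimage, Set.mem_singleton_iff]
      tauto
    rw [e]
  -- F1
  have F1 : ∀ (g : Fin m) (i j : Fin k),
      condP μ {ω | Y0 ω = i ∧ Y1 ω = j} {ω | G ω = g} =
        condP μ {ω | Y0 ω = i} {ω | G ω = g} * condP μ {ω | Y1 ω = j} {ω | Y0 ω = i} := by
    intro g i j
    have eB : ({ω | Y0 ω = i} : Set Ω) ∩ {ω | G ω = g} = {ω | Y0 ω = i ∧ G ω = g} := rfl
    by_cases hB : μ {ω | Y0 ω = i ∧ G ω = g} = 0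
    · have hsub : μ ({ω | Y0 ω = i ∧ Y1 ω = j} ∩ {ω | G ω = g}) = 0 := by
        refine measure_mono_null ?_ hB
        rintro ω ⟨⟨h1, h2⟩, h3⟩; exact ⟨h1, h3⟩
      simp only [condP, eB, hsub, hB, ENNReal.toReal_zero, zero_div, zero_mul, mul_zero]
    · have hBpos : 0 < μ {ω | Y0 ω = i ∧ G ω = g} := pos_iff_ne_zero.mpr hB
      have hBr : 0 < (μ {ω | Y0 ω = i ∧ G ω = g}).toReal :=
        ENNReal.toReal_pos hB (measure_ne_top μ _)
      have h2 := hA2 i j g hBpos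
      have eN : ({ω | Y1 ω = j} : Set Ω) ∩ {ω | Y0 ω = i ∧ G ω = g}
          = {ω | Y0 ω = i ∧ Y1 ω = j} ∩ {ω | G ω = g} := by
        ext ω
        simp only [Set.mem_inter_iff, Set.mem_setOf_eq]
        tauto
      rw [← h2]
      simp only [condP, eN, eB]
      field_simp
  refine ⟨F1, ?_, ?_, ?_, ?_, ?_, ?_⟩
  · -- F2
    intro g i
    have h := hAfsum g i
    calc (μ {ω | G ω = g ∧ A ω = false ∧ Y ω = i}).toReal
        = condP μ {ω | A ω = false ∧ Y0 ω = i} {ω | G ω = g} * (μ {ω | G ω = g}).toReal := by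
          simp only [condP, eAf]
          rw [div_mul_cancel₀]
          exact (hPgpos g).ne'
      _ = _ := by
          rw [← h]
          simp only [hA1ind g false i]
          rw [← Finset.mul_sum, hp0sum g i]
  · -- F3
    intro g j
    have h := hAtsum g j
    calc (μ {ω | G ω = g ∧ A ω = true ∧ Y ω = j}).toReal
        = condP μ {ω | A ω = true ∧ Y1 ω = j} {ω | G ω = g} * (μ {ω | G ω = g}).toReal := by
          simp only [condP, eAt]
          rw [div_mul_cancel₀]
          exact (hPgpos g).ne'
      _ = _ := by
          rw [← h]
          have : ∀ i, condP μ {ω | A ω = true ∧ Y0 ω = i ∧ Y1 ω = j} {ω | G ω = g} =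
              condP μ {ω | A ω = true} {ω | G ω = g} *
                condP μ {ω | Y0 ω = i ∧ Y1 ω = j} {ω | G ω = g} := fun i => hA1ind g true i j
          simp only [this]
          rw [← Finset.mul_sum, hq0sum g j]
  · -- F4
    intro g j
    rw [← hq0sum g j]
    exact Finset.sum_congr rfl fun i _ => F1 g i j
  · -- F5a
    intro g
    rw [toReal_partition μ hAmeas (hMG g)]
    refine Finset.sum_congr rfl fun a _ => ?_
    have hYmeas : Measurable Y := by
      have hY : Y = fun ω => if A ω = true then Y1 ω else Y0 ω := by
        funext ω; rw [hYdef ω]; cases A ω <;> simp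
      rw [hY]
      exact Measurable.ite (hMA true) hY1meas hY0meas
    rw [toReal_partition μ (f := Y) hYmeas (S := {ω | G ω = g} ∩ A ⁻¹' {a}) ((hMG g).inter (hMA a))]
    refine Finset.sum_congr rfl fun y _ => ?_
    have e : ({ω | G ω = g} : Set Ω) ∩ A ⁻¹' {a} ∩ Y ⁻¹' {y}
        = {ω | G ω = g ∧ A ω = a ∧ Y ω = y} := by
      ext ω
      simp only [Set.mem_inter_iff, Set.mem_setOf_eq, Set.mem_preimage, Set.mem_singleton_iff]
      tauto
    rw [e]
  · -- F5b
    intro g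
    have e : ({ω | A ω = true} : Set Ω) ∩ {ω | G ω = g} = {ω | G ω = g} ∩ A ⁻¹' {true} := by
      ext ω; simp only [Set.mem_inter_iff, Set.mem_setOf_eq, Set.mem_preimage,
        Set.mem_singleton_iff]; tauto
    simp only [condP]
    have hYmeas : Measurable Y := by
      have hY : Y = fun ω => if A ω = true then Y1 ω else Y0 ω := by
        funext ω; rw [hYdef ω]; cases A ω <;> simp
      rw [hY]
      exact Measurable.ite (hMA true) hY1meas hY0meas
    rw [div_mul_cancel₀ _ (hPgpos g).ne', e,
      toReal_partition μ (f := Y) hYmeas (S := {ω | G ω = g} ∩ A ⁻¹' {true})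
        ((hMG g).inter (hMA true))]
    refine Finset.sum_congr rfl fun y _ => ?_
    have e2 : ({ω | G ω = g} : Set Ω) ∩ A ⁻¹' {true} ∩ Y ⁻¹' {y}
        = {ω | G ω = g ∧ A ω = true ∧ Y ω = y} := by
      ext ω
      simp only [Set.mem_inter_iff, Set.mem_setOf_eq, Set.mem_preimage, Set.mem_singleton_iff]
      constructor
      · rintro ⟨⟨hg, ha⟩, hy⟩; exact ⟨hg, ha, hy⟩
      · rintro ⟨hg, ha, hy⟩; exact ⟨⟨hg, ha⟩, hy⟩
    rw [e2]
  · -- F5c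
    intro g
    have h := toReal_partition μ hAmeas (hMG g)
    rw [Fintype.sum_bool] at h
    have e1 : ({ω | G ω = g} : Set Ω) ∩ A ⁻¹' {true} = {ω | A ω = true} ∩ {ω | G ω = g} := by
      ext ω; simp only [Set.mem_inter_iff, Set.mem_setOf_eq, Set.mem_preimage,
        Set.mem_singleton_iff]; tauto
    have e2 : ({ω | G ω = g} : Set Ω) ∩ A ⁻¹' {false} = {ω | A ω = false} ∩ {ω | G ω = g} := by
      ext ω; simp only [Set.mem_inter_iff, Set.mem_setOf_eq, Set.mem_preimage,
        Set.mem_singleton_iff]; tauto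
    rw [e1, e2] at h
    simp only [condP]
    rw [eq_sub_iff_add_eq, ← add_div, div_eq_one_iff_eq (hPgpos g).ne']
    linarith [h]
lemma rank_inj {m k : ℕ} {M : Matrix (Fin m) (Fin k) ℝ} (h : M.rank = k) {v : Fin k → ℝ}
    (hv : M.mulVec v = 0) : v = 0 := by
  have h1 : LinearMap.ker M.mulVecLin = ⊥ := by
    have h2 := M.mulVecLin.finrank_range_add_finrank_ker
    rw [Matrix.rank] at h
    simp [h, Module.finrank_fintype_fun_eq_card] at h2
    exact h2
  exact (LinearMap.ker_eq_bot.mp h1) (by simpa using hv)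

/-- **Theorem 2 (categorical outcome).** For an outcome with `k` categories, under
Assumption 1, the categorical version of Assumption 2, and Condition 2 (the `m × k`
matrix of `P(Y⁰ = i | G = g)` has full column rank `k`), the joint distributions
`P(Y⁰, Y¹ | G = g)` are identified from the observed data distribution. -/
theorem stmt1
    {Ω Ω' : Type*} [MeasurableSpace Ω] [MeasurableSpace Ω']
    (μ : Measure Ω) (μ' : Measure Ω')
    [IsProbabilityMeasure μ] [IsProbabilityMeasure μ']
    {m k : ℕ} (hm : 1 ≤ m) (hk : 1 ≤ k)
    (G : Ω → Fin m) (A : Ω → Bool) (Y0 Y1 Y : Ω → Fin k)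
    (G' : Ω' → Fin m) (A' : Ω' → Bool) (Y0' Y1' Y' : Ω' → Fin k)
    (hGmeas : Measurable G) (hAmeas : Measurable A)
    (hY0meas : Measurable Y0) (hY1meas : Measurable Y1)
    (hG'meas : Measurable G') (hA'meas : Measurable A')
    (hY0'meas : Measurable Y0') (hY1'meas : Measurable Y1')
    (hYdef : ∀ ω, Y ω = bif A ω then Y1 ω else Y0 ω)
    (hY'def : ∀ ω, Y' ω = bif A' ω then Y1' ω else Y0' ω)
    -- Assumption 1 for μ
    (hA1pos : ∀ g : Fin m, 0 < μ {ω | G ω = g})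
    (hA1ov : ∀ g : Fin m, 0 < condP μ {ω | A ω = true} {ω | G ω = g} ∧
        condP μ {ω | A ω = true} {ω | G ω = g} < 1)
    (hA1ind : ∀ (g : Fin m) (a : Bool) (i j : Fin k),
      condP μ {ω | A ω = a ∧ Y0 ω = i ∧ Y1 ω = j} {ω | G ω = g} =
        condP μ {ω | A ω = a} {ω | G ω = g} *
          condP μ {ω | Y0 ω = i ∧ Y1 ω = j} {ω | G ω = g})
    -- Assumption 1 for μ'
    (hA1pos' : ∀ g : Fin m, 0 < μ' {ω | G' ω = g})
    (hA1ov' : ∀ g : Fin m, 0 < condP μ' {ω | A' ω = true} {ω | G' ω = g} ∧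
        condP μ' {ω | A' ω = true} {ω | G' ω = g} < 1)
    (hA1ind' : ∀ (g : Fin m) (a : Bool) (i j : Fin k),
      condP μ' {ω | A' ω = a ∧ Y0' ω = i ∧ Y1' ω = j} {ω | G' ω = g} =
        condP μ' {ω | A' ω = a} {ω | G' ω = g} *
          condP μ' {ω | Y0' ω = i ∧ Y1' ω = j} {ω | G' ω = g})
    -- Assumption 2 (categorical version) for μ
    (hA2pos : ∀ i : Fin k, 0 < μ {ω | Y0 ω = i})
    (hA2 : ∀ (i j : Fin k) (g : Fin m), 0 < μ {ω | Y0 ω = i ∧ G ω = g} →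
      condP μ {ω | Y1 ω = j} {ω | Y0 ω = i ∧ G ω = g} =
        condP μ {ω | Y1 ω = j} {ω | Y0 ω = i})
    -- Assumption 2 (categorical version) for μ'
    (hA2pos' : ∀ i : Fin k, 0 < μ' {ω | Y0' ω = i})
    (hA2' : ∀ (i j : Fin k) (g : Fin m), 0 < μ' {ω | Y0' ω = i ∧ G' ω = g} →
      condP μ' {ω | Y1' ω = j} {ω | Y0' ω = i ∧ G' ω = g} =
        condP μ' {ω | Y1' ω = j} {ω | Y0' ω = i})
    -- Condition 2 for μ and μ'
    (hC2 : (Matrix.of fun (g : Fin m) (i : Fin k) =>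
      condP μ {ω | Y0 ω = i} {ω | G ω = g}).rank = k)
    (hC2' : (Matrix.of fun (g : Fin m) (i : Fin k) =>
      condP μ' {ω | Y0' ω = i} {ω | G' ω = g}).rank = k)
    -- equal observed data distributions
    (hobs : ∀ (g : Fin m) (a : Bool) (y : Fin k),
      μ {ω | G ω = g ∧ A ω = a ∧ Y ω = y} = μ' {ω | G' ω = g ∧ A' ω = a ∧ Y' ω = y}) :
    ∀ (i j : Fin k) (g : Fin m),
      condP μ {ω | Y0 ω = i ∧ Y1 ω = j} {ω | G ω = g} =
        condP μ' {ω | Y0' ω = i ∧ Y1' ω = j} {ω | G' ω = g} := by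
  obtain ⟨F1, F2, F3, F4, F5a, F5b, F5c⟩ :=
    model_facts μ G A Y0 Y1 Y hGmeas hAmeas hY0meas hY1meas hYdef hA1pos hA1ind hA2
  obtain ⟨F1', F2', F3', F4', F5a', F5b', F5c'⟩ :=
    model_facts μ' G' A' Y0' Y1' Y' hG'meas hA'meas hY0'meas hY1'meas hY'def hA1pos' hA1ind' hA2'
  have hobsR : ∀ (g : Fin m) (a : Bool) (y : Fin k),
      (μ {ω | G ω = g ∧ A ω = a ∧ Y ω = y}).toReal
        = (μ' {ω | G' ω = g ∧ A' ω = a ∧ Y' ω = y}).toReal := fun g a y => by rw [hobs]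
  have hPgpos : ∀ g, 0 < (μ {ω | G ω = g}).toReal := fun g =>
    ENNReal.toReal_pos (hA1pos g).ne' (measure_ne_top μ _)
  have hPg : ∀ g, (μ {ω | G ω = g}).toReal = (μ' {ω | G' ω = g}).toReal := fun g => by
    rw [F5a g, F5a' g]
    exact Finset.sum_congr rfl fun a _ => Finset.sum_congr rfl fun y _ => hobsR g a y
  have hpAt : ∀ g, condP μ {ω | A ω = true} {ω | G ω = g}
      = condP μ' {ω | A' ω = true} {ω | G' ω = g} := by
    intro g
    have h1 : condP μ {ω | A ω = true} {ω | G ω = g} * (μ {ω | G ω = g}).toReal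
        = condP μ' {ω | A' ω = true} {ω | G' ω = g} * (μ {ω | G ω = g}).toReal := by
      rw [F5b g, hPg g, F5b' g]
      exact Finset.sum_congr rfl fun y _ => hobsR g true y
    exact mul_right_cancel₀ (hPgpos g).ne' h1
  have hpAf : ∀ g, condP μ {ω | A ω = false} {ω | G ω = g}
      = condP μ' {ω | A' ω = false} {ω | G' ω = g} := fun g => by
    rw [F5c g, F5c' g, hpAt g]
  have hpAfpos : ∀ g, 0 < condP μ {ω | A ω = false} {ω | G ω = g} := fun g => by
    rw [F5c g]; linarith [(hA1ov g).2]
  have hp0 : ∀ g i, condP μ {ω | Y0 ω = i} {ω | G ω = g}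
      = condP μ' {ω | Y0' ω = i} {ω | G' ω = g} := by
    intro g i
    have h1 := F2 g i
    rw [hobsR g false i, F2' g i, ← hpAf g, ← hPg g] at h1
    have h2 := mul_right_cancel₀ (hPgpos g).ne' h1
    exact (mul_left_cancel₀ (hpAfpos g).ne' h2).symm
  have hq : ∀ g j, condP μ {ω | Y1 ω = j} {ω | G ω = g}
      = condP μ' {ω | Y1' ω = j} {ω | G' ω = g} := by
    intro g j
    have h1 := F3 g j
    rw [hobsR g true j, F3' g j, ← hpAt g, ← hPg g] at h1
    have h2 := mul_right_cancel₀ (hPgpos g).ne' h1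
    exact (mul_left_cancel₀ (hA1ov g).1.ne' h2).symm
  have hT : ∀ i j, condP μ {ω | Y1 ω = j} {ω | Y0 ω = i}
      = condP μ' {ω | Y1' ω = j} {ω | Y0' ω = i} := by
    intro i j
    have hv : (Matrix.of fun (g : Fin m) (i : Fin k) =>
        condP μ {ω | Y0 ω = i} {ω | G ω = g}).mulVec
        (fun i => condP μ {ω | Y1 ω = j} {ω | Y0 ω = i}
          - condP μ' {ω | Y1' ω = j} {ω | Y0' ω = i}) = 0 := by
      funext g
      simp only [Matrix.mulVec, dotProduct, Matrix.of_apply, Pi.zero_apply, mul_sub]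
      rw [Finset.sum_sub_distrib, ← F4 g j]
      have e : ∑ i, condP μ {ω | Y0 ω = i} {ω | G ω = g}
            * condP μ' {ω | Y1' ω = j} {ω | Y0' ω = i}
          = ∑ i, condP μ' {ω | Y0' ω = i} {ω | G' ω = g}
            * condP μ' {ω | Y1' ω = j} {ω | Y0' ω = i} :=
        Finset.sum_congr rfl fun i _ => by rw [hp0 g i]
      rw [e, ← F4' g j, hq g j, sub_self]
    have hz := rank_inj hC2 hv
    have := congrFun hz i
    simpa [sub_eq_zero] using this
  intro i j g
  rw [F1 g i j, F1' g i j, hp0 g i, hT i j]
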